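/- Let G = (V, E_1, …, E_N) be an infinite, locally finite, connected, quasi-transitive edge-coloured graph with N colours. Then the set 𝒜^c := {p ∈ [0,1]^{N−1} : λ ↦ q_ψ(p + λ1) is not left-continuous at λ = 0} has Lebesgue measure zero in [0,1]^{N−1}. -/

import Mathlib

open MeasureTheory ENNReal Set
open scoped Classical

namespace InhomPerc

variable {V : Type*} {N : ℕ}

/-- The edge set of an edge-coloured graph: the union of all colour classes. -/
def Eset (E : Fin N → Set (Sym2 V)) : Set (Sym2 V) := ⋃ i, E i

/-- The colour classes are mutually disjoint. -/
def DisjointColours (E : Fin N → Set (Sym2 V)) : Prop :=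
  ∀ i j : Fin N, i ≠ j → Disjoint (E i) (E j)

/-- Every edge is a pair of two *distinct* vertices. -/
def NoLoops (E : Fin N → Set (Sym2 V)) : Prop := ∀ e ∈ Eset E, ¬ e.IsDiag

/-- The underlying simple graph of the edge-coloured graph. -/
def graph (E : Fin N → Set (Sym2 V)) : SimpleGraph V where
  Adj u v := u ≠ v ∧ s(u, v) ∈ Eset E
  symm := by
    constructor
    intro u v h
    refine ⟨h.1.symm, ?_⟩
    rw [Sym2.eq_swap]
    exact h.2
  loopless := ⟨fun v h => h.1 rfl⟩

/-- Local finiteness: every vertex lies in finitely many edges. -/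
def LocFin (E : Fin N → Set (Sym2 V)) : Prop :=
  ∀ v : V, {e ∈ Eset E | v ∈ e}.Finite

/-- Connectivity of the edge-coloured graph. -/
def ConnectedGraph (E : Fin N → Set (Sym2 V)) : Prop := (graph E).Connected

/-- Quasi-transitivity: the vertices can be partitioned into finitely many classes
such that vertices in the same class are related by a coloured graph automorphism. -/
def QuasiTransitive (E : Fin N → Set (Sym2 V)) : Prop :=
  ∃ (k : ℕ) (c : V → Fin k), ∀ u v : V, c u = c v →
    ∃ f : V ≃ V, (∀ (i : Fin N) (e : Sym2 V), e ∈ E i ↔ e.map f ∈ E i) ∧ f v = u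

/-- Graph distance. -/
noncomputable def dist (E : Fin N → Set (Sym2 V)) (u v : V) : ℕ := (graph E).dist u v

/-- Percolation configurations: each (potential) edge is open (`true`) or closed. -/
abbrev Config (V : Type*) := Sym2 V → Bool

/-- `x` is joined to `y` by a path of open edges all of whose endpoints lie in `S`. -/
def ConnIn (E : Fin N → Set (Sym2 V)) (ω : Config V) (S : Set V) (x y : V) : Prop :=
  Relation.ReflTransGen
    (fun a b => a ∈ S ∧ b ∈ S ∧ s(a, b) ∈ Eset E ∧ ω s(a, b) = true) x y

/-- The open cluster of `x`. -/
def cluster (E : Fin N → Set (Sym2 V)) (ω : Config V) (x : V) : Set V :=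
  {y | ConnIn E ω Set.univ x y}

/-- The retention probability of an edge `e` under the parameter vector `r`:
`r i` for an edge of colour `i`, `0` for non-edges (by disjointness at most one
summand is nonzero). -/
noncomputable def edgeProb (E : Fin N → Set (Sym2 V)) (r : Fin N → ℝ) (e : Sym2 V) : ℝ :=
  ∑ i : Fin N, if e ∈ E i then r i else 0

/-- `P` is the family of inhomogeneous percolation (product) measures: for each valid
parameter vector `r` it is a probability measure whose cylinder probabilities are the
products of the individual edge-retention probabilities. -/
def IsPercFamily (E : Fin N → Set (Sym2 V)) (P : (Fin N → ℝ) → Measure (Config V)) : Prop :=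
  ∀ r : Fin N → ℝ, (∀ i, r i ∈ Icc (0 : ℝ) 1) →
    IsProbabilityMeasure (P r) ∧
    ∀ (F : Finset (Sym2 V)) (σ : Sym2 V → Bool),
      P r {ω | ∀ e ∈ F, ω e = σ e} =
        ∏ e ∈ F, ENNReal.ofReal (if σ e then edgeProb E r e else 1 - edgeProb E r e)

/-- The full parameter vector `(p₁, …, p_{N-1}, q)`. -/
noncomputable def pFull (N : ℕ) (p : Fin (N - 1) → ℝ) (q : ℝ) : Fin N → ℝ :=
  fun i => if h : (i : ℕ) < N - 1 then p ⟨i, h⟩ else q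

/-- The percolation function `θ`. -/
noncomputable def theta (E : Fin N → Set (Sym2 V)) (P : (Fin N → ℝ) → Measure (Config V))
    (r : Fin N → ℝ) : ℝ≥0∞ :=
  ⨆ x : V, P r {ω | (cluster E ω x).Infinite}

/-- The susceptibility `χ`. -/
noncomputable def chi (E : Fin N → Set (Sym2 V)) (P : (Fin N → ℝ) → Measure (Config V))
    (r : Fin N → ℝ) : ℝ≥0∞ :=
  ⨆ x : V, ∫⁻ ω, ((cluster E ω x).encard : ℝ≥0∞) ∂(P r)

/-- The `θ`-critical surface. -/
noncomputable def qTheta (E : Fin N → Set (Sym2 V)) (P : (Fin N → ℝ) → Measure (Config V))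
    (p : Fin (N - 1) → ℝ) : ℝ :=
  sInf (insert (1 : ℝ) {q | q ∈ Icc (0 : ℝ) 1 ∧ 0 < theta E P (pFull N p q)})

/-- The `χ`-critical surface. -/
noncomputable def qChi (E : Fin N → Set (Sym2 V)) (P : (Fin N → ℝ) → Measure (Config V))
    (p : Fin (N - 1) → ℝ) : ℝ :=
  sInf (insert (1 : ℝ) {q | q ∈ Icc (0 : ℝ) 1 ∧ chi E P (pFull N p q) = ⊤})

/-- `ψ_{p,q}(x,S) = Σᵢ pᵢ Σ_{{y,z} ∈ ΔS ∩ Eᵢ} P(x ↔_S y)` (each boundary edge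
is enumerated by its unique orientation `y ∈ S`, `z ∉ S`). -/
noncomputable def psi (E : Fin N → Set (Sym2 V)) (P : (Fin N → ℝ) → Measure (Config V))
    (r : Fin N → ℝ) (x : V) (S : Finset V) : ℝ≥0∞ :=
  ∑ i : Fin N, ENNReal.ofReal (r i) *
    ∑ y ∈ S, ∑' z : V,
      (if z ∉ S ∧ s(y, z) ∈ E i then P r {ω | ConnIn E ω ↑S x y} else 0)

/-- The `ψ`-critical surface. -/
noncomputable def qPsi (E : Fin N → Set (Sym2 V)) (P : (Fin N → ℝ) → Measure (Config V))
    (p : Fin (N - 1) → ℝ) : ℝ :=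
  sSup {q | q ∈ Icc (0 : ℝ) 1 ∧
    ∀ x : V, ∃ S : Finset V, x ∈ S ∧ psi E P (pFull N p q) x S < 1}

/-- The event that `x` is joined by an open path to `∂Λ_k^x` (the set of vertices
at graph distance exactly `k` from `x`). -/
def ConnSphere (E : Fin N → Set (Sym2 V)) (ω : Config V) (x : V) (k : ℕ) : Prop :=
  ∃ y : V, dist E x y = k ∧ ConnIn E ω Set.univ x y

/-! ### Auxiliary machinery for the proof -/

section Aux

/-- Weight of a configuration set under a finite product Bernoulli. -/
noncomputable def W {ι : Type*} (F : Finset ι) (π : ι → ℝ) (A : Finset ι → Prop) : ℝ :=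
  ∑ K ∈ F.powerset, (if A K then ∏ e ∈ F, (if e ∈ K then π e else 1 - π e) else 0)

lemma prod_w_nonneg {ι : Type*} (F : Finset ι) (π : ι → ℝ) (K : Finset ι)
    (hπ : ∀ e ∈ F, 0 ≤ π e ∧ π e ≤ 1) :
    0 ≤ ∏ e ∈ F, (if e ∈ K then π e else 1 - π e) := by
  refine Finset.prod_nonneg fun e he => ?_
  split_ifs
  · exact (hπ e he).1
  · linarith [(hπ e he).2]

lemma W_nonneg {ι : Type*} (F : Finset ι) (π : ι → ℝ) (A : Finset ι → Prop)
    (hπ : ∀ e ∈ F, 0 ≤ π e ∧ π e ≤ 1) : 0 ≤ W F π A := by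
  refine Finset.sum_nonneg fun K _ => ?_
  split_ifs
  · exact prod_w_nonneg F π K hπ
  · exact le_rfl

lemma W_le_W_of_imp {ι : Type*} (F : Finset ι) (π : ι → ℝ) (A B : Finset ι → Prop)
    (hπ : ∀ e ∈ F, 0 ≤ π e ∧ π e ≤ 1) (h : ∀ K, A K → B K) : W F π A ≤ W F π B := by
  refine Finset.sum_le_sum fun K _ => ?_
  by_cases hA : A K
  · rw [if_pos hA, if_pos (h K hA)]
  · rw [if_neg hA]
    split_ifs
    · exact prod_w_nonneg F π K hπ
    · exact le_rfl

lemma W_insert {ι : Type*} (F : Finset ι) (a : ι) (ha : a ∉ F) (π : ι → ℝ)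
    (A : Finset ι → Prop) :
    W (insert a F) π A
      = (1 - π a) * W F π A + π a * W F π (fun K => A (insert a K)) := by
  rw [W, Finset.sum_powerset_insert ha]
  congr 1
  · rw [W, Finset.mul_sum]
    refine Finset.sum_congr rfl fun K hK => ?_
    have haK : a ∉ K := fun h => ha (Finset.mem_powerset.1 hK h)
    by_cases hA : A K
    · rw [if_pos hA, if_pos hA, Finset.prod_insert ha, if_neg haK]
    · rw [if_neg hA, if_neg hA, mul_zero]
  · rw [W, Finset.mul_sum]
    refine Finset.sum_congr rfl fun K hK => ?_
    by_cases hA : A (insert a K)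
    · rw [if_pos hA, if_pos hA, Finset.prod_insert ha, if_pos (Finset.mem_insert_self a K)]
      congr 1
      refine Finset.prod_congr rfl fun e he => ?_
      have hea : e ≠ a := fun h => ha (h ▸ he)
      by_cases heK : e ∈ K
      · rw [if_pos heK, if_pos (Finset.mem_insert_of_mem heK)]
      · rw [if_neg heK, if_neg (by simp [Finset.mem_insert, hea, heK])]
    · rw [if_neg hA, if_neg hA, mul_zero]

lemma W_mono {ι : Type*} (F : Finset ι) (π π' : ι → ℝ) (A : Finset ι → Prop)
    (hπ : ∀ e ∈ F, 0 ≤ π e ∧ π e ≤ π' e ∧ π' e ≤ 1)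
    (hA : ∀ K K', K ⊆ K' → A K → A K') : W F π A ≤ W F π' A := by
  revert hπ
  induction F using Finset.induction_on generalizing A with
  | empty => intro _; simp [W]
  | insert _ _ ha _ =>
    rename_i a F ih
    intro hπ
    have hπF : ∀ e ∈ F, 0 ≤ π e ∧ π e ≤ π' e ∧ π' e ≤ 1 :=
      fun e he => hπ e (Finset.mem_insert_of_mem he)
    have hπa := hπ a (Finset.mem_insert_self a F)
    have h1 : ∀ e ∈ F, 0 ≤ π' e ∧ π' e ≤ 1 := fun e he =>
      ⟨le_trans (hπF e he).1 (hπF e he).2.1, (hπF e he).2.2⟩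
    have hA1 : ∀ K K', K ⊆ K' → A (insert a K) → A (insert a K') :=
      fun K K' hKK' => hA _ _ (Finset.insert_subset_insert a hKK')
    have key1 : W F π A ≤ W F π' A := ih A hA hπF
    have key2 : W F π (fun K => A (insert a K)) ≤ W F π' (fun K => A (insert a K)) :=
      ih _ hA1 hπF
    have key3 : W F π' A ≤ W F π' (fun K => A (insert a K)) :=
      W_le_W_of_imp F π' A _ h1 (fun K hK => hA K (insert a K) (Finset.subset_insert a K) hK)
    rw [W_insert F a ha π A, W_insert F a ha π' A]
    have h0a : 0 ≤ π a := hπa.1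
    have h1a : π a ≤ π' a := hπa.2.1
    have h2a : π' a ≤ 1 := hπa.2.2
    nlinarith [key1, key2, key3, W_nonneg F π' A h1]

/-! ### edgeProb lemmas -/

lemma edgeProb_nonneg (E : Fin N → Set (Sym2 V)) (r : Fin N → ℝ)
    (hr : ∀ i, r i ∈ Icc (0 : ℝ) 1) (e : Sym2 V) : 0 ≤ edgeProb E r e := by
  refine Finset.sum_nonneg fun i _ => ?_
  split_ifs
  · exact (hr i).1
  · exact le_rfl

lemma edgeProb_le_one (E : Fin N → Set (Sym2 V)) (hdisj : DisjointColours E) (r : Fin N → ℝ)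
    (hr : ∀ i, r i ∈ Icc (0 : ℝ) 1) (e : Sym2 V) : edgeProb E r e ≤ 1 := by
  by_cases h : ∃ i, e ∈ E i
  · obtain ⟨i0, hi0⟩ := h
    rw [edgeProb, Finset.sum_eq_single i0]
    · rw [if_pos hi0]; exact (hr i0).2
    · intro j _ hj
      rw [if_neg]
      intro hej
      exact Set.disjoint_left.mp (hdisj j i0 hj) hej hi0
    · intro h; exact absurd (Finset.mem_univ i0) h
  · push_neg at h
    rw [edgeProb]
    rw [Finset.sum_eq_zero (fun i _ => if_neg (h i))]
    exact zero_le_one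

lemma edgeProb_mono (E : Fin N → Set (Sym2 V)) (r r' : Fin N → ℝ)
    (hle : ∀ i, r i ≤ r' i) (e : Sym2 V) : edgeProb E r e ≤ edgeProb E r' e := by
  refine Finset.sum_le_sum fun i _ => ?_
  split_ifs
  · exact hle i
  · exact le_rfl

end Aux
section Aux2

lemma connIn_congr (E : Fin N → Set (Sym2 V)) (S : Set V) (ω ω' : Config V)
    (h : ∀ a b, a ∈ S → b ∈ S → s(a, b) ∈ Eset E → ω s(a, b) = ω' s(a, b)) (x y : V) :
    ConnIn E ω S x y ↔ ConnIn E ω' S x y := by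
  constructor
  · intro hc
    refine Relation.ReflTransGen.mono ?_ _ _ hc
    rintro a b ⟨ha, hb, he, hω⟩
    exact ⟨ha, hb, he, by rw [← h a b ha hb he]; exact hω⟩
  · intro hc
    refine Relation.ReflTransGen.mono ?_ _ _ hc
    rintro a b ⟨ha, hb, he, hω⟩
    exact ⟨ha, hb, he, by rw [h a b ha hb he]; exact hω⟩

lemma connIn_mono (E : Fin N → Set (Sym2 V)) (S : Set V) (K K' : Finset (Sym2 V))
    (hKK' : K ⊆ K') (x y : V)
    (hc : ConnIn E (fun e => if e ∈ K then true else false) S x y) :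
    ConnIn E (fun e => if e ∈ K' then true else false) S x y := by
  refine Relation.ReflTransGen.mono ?_ _ _ hc
  rintro a b ⟨ha, hb, he, hω⟩
  refine ⟨ha, hb, he, ?_⟩
  simp only [if_pos] at hω ⊢
  by_cases hK : s(a, b) ∈ K
  · rw [if_pos (hKK' hK)]
  · rw [if_neg hK] at hω; exact absurd hω (by simp)

/-- The edges relevant for connectivity within `S`. -/
noncomputable def edgesIn (E : Fin N → Set (Sym2 V)) (S : Finset V) : Finset (Sym2 V) :=
  S.sym2.filter (· ∈ Eset E)

/-- The probability of the connection event, as an explicit polynomial in the parameters. -/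
lemma measure_connIn (E : Fin N → Set (Sym2 V)) (hdisj : DisjointColours E)
    (P : (Fin N → ℝ) → Measure (Config V)) (hP : IsPercFamily E P)
    (r : Fin N → ℝ) (hr : ∀ i, r i ∈ Icc (0 : ℝ) 1) (S : Finset V) (x y : V) :
    P r {ω | ConnIn E ω ↑S x y}
      = ENNReal.ofReal (W (edgesIn E S) (edgeProb E r)
          (fun K => ConnIn E (fun e => if e ∈ K then true else false) ↑S x y)) := by
  set F : Finset (Sym2 V) := edgesIn E S with hF
  set A : Finset (Sym2 V) → Prop :=
    fun K => ConnIn E (fun e => if e ∈ K then true else false) ↑S x y with hA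
  -- locality of the event
  have hmemF : ∀ a b : V, a ∈ S → b ∈ S → s(a, b) ∈ Eset E → s(a, b) ∈ F := by
    intro a b ha hb he
    rw [hF, edgesIn, Finset.mem_filter, Finset.mk_mem_sym2_iff]
    exact ⟨⟨ha, hb⟩, he⟩
  have hloc : ∀ ω : Config V, ConnIn E ω ↑S x y ↔ A (F.filter fun e => ω e = true) := by
    intro ω
    refine connIn_congr E ↑S ω _ ?_ x y
    intro a b ha hb he
    have hmem : s(a, b) ∈ F := hmemF a b ha hb he
    by_cases hω : ω s(a, b) = true
    · rw [hω, if_pos (Finset.mem_filter.mpr ⟨hmem, hω⟩)]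
    · have hωf : ω s(a, b) = false := by simp only [Bool.not_eq_true] at hω; exact hω
      have hnm : s(a, b) ∉ F.filter (fun e => ω e = true) :=
        fun hc => hω (Finset.mem_filter.mp hc).2
      simp only [hωf, if_neg hnm]
  -- the event as a finite disjoint union of cylinders
  have cover : {ω : Config V | ConnIn E ω ↑S x y}
      = ⋃ K ∈ F.powerset.filter A,
          {ω : Config V | ∀ e ∈ F, ω e = (if e ∈ K then true else false)} := by
    ext ω
    simp only [Set.mem_setOf_eq, Set.mem_iUnion, Finset.mem_filter, Finset.mem_powerset,
      exists_prop]
    constructor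
    · intro hc
      refine ⟨F.filter fun e => ω e = true, ⟨Finset.filter_subset _ _, (hloc ω).mp hc⟩, ?_⟩
      intro e he
      by_cases hω : ω e = true
      · rw [hω, if_pos (Finset.mem_filter.mpr ⟨he, hω⟩)]
      · have hωf : ω e = false := by simp only [Bool.not_eq_true] at hω; exact hω
        have hnm : e ∉ F.filter (fun e => ω e = true) :=
          fun hc' => hω (Finset.mem_filter.mp hc').2
        simp only [hωf, if_neg hnm]
    · rintro ⟨K, ⟨hKF, hAK⟩, hcyl⟩
      rw [hloc ω]
      have : F.filter (fun e => ω e = true) = K := by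
        ext e
        rw [Finset.mem_filter]
        constructor
        · rintro ⟨heF, hωe⟩
          rw [hcyl e heF] at hωe
          by_cases heK : e ∈ K
          · exact heK
          · rw [if_neg heK] at hωe; exact absurd hωe (by simp)
        · intro heK
          refine ⟨hKF heK, ?_⟩
          rw [hcyl e (hKF heK), if_pos heK]
      rw [this]
      exact hAK
  rw [cover, measure_biUnion_finset]
  · -- compute each cylinder probability via `hP`
    have hcyl : ∀ K ∈ F.powerset.filter A,
        P r {ω : Config V | ∀ e ∈ F, ω e = (if e ∈ K then true else false)}
          = ENNReal.ofReal (∏ e ∈ F, (if e ∈ K then edgeProb E r e else 1 - edgeProb E r e)) := by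
      intro K _
      have := (hP r hr).2 F (fun e => if e ∈ K then true else false)
      rw [this, ENNReal.ofReal_prod_of_nonneg]
      · refine Finset.prod_congr rfl fun e he => ?_
        by_cases heK : e ∈ K
        · simp [heK]
        · simp [heK]
      · intro e he
        split_ifs
        · exact edgeProb_nonneg E r hr e
        · linarith [edgeProb_le_one E hdisj r hr e]
    rw [Finset.sum_congr rfl hcyl, ← ENNReal.ofReal_sum_of_nonneg]
    · congr 1
      rw [W, Finset.sum_filter]
      refine Finset.sum_congr rfl fun K _ => ?_
      by_cases hAK : A K
      · rw [if_pos (show ConnIn E (fun e => if e ∈ K then true else false) ↑S x y from hAK), if_pos hAK]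
        refine Finset.prod_congr rfl fun e _ => ?_
        by_cases heK : e ∈ K
        · simp [heK]
        · simp [heK]
      · rw [if_neg (show ¬ ConnIn E (fun e => if e ∈ K then true else false) ↑S x y from hAK), if_neg hAK]
    · intro K _
      refine Finset.prod_nonneg fun e _ => ?_
      split_ifs
      · exact edgeProb_nonneg E r hr e
      · linarith [edgeProb_le_one E hdisj r hr e]
  · -- pairwise disjoint cylinders
    intro K hK K' hK' hne
    simp only [Finset.coe_filter, Set.mem_setOf_eq] at hK hK'
    refine Set.disjoint_left.mpr ?_
    intro ω hω hω'
    apply hne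
    have hKF : K ⊆ F := Finset.mem_powerset.mp hK.1
    have hK'F : K' ⊆ F := Finset.mem_powerset.mp hK'.1
    ext e
    by_cases heF : e ∈ F
    · have h1 := hω e heF
      have h2 := hω' e heF
      rw [h1] at h2
      constructor
      · intro heK
        rw [if_pos heK] at h2
        by_cases heK' : e ∈ K'
        · exact heK'
        · rw [if_neg heK'] at h2; exact absurd h2 (by simp)
      · intro heK'
        rw [if_pos heK'] at h2
        by_cases heK : e ∈ K
        · exact heK
        · rw [if_neg heK] at h2; exact absurd h2.symm (by simp)
    · constructor
      · intro h; exact absurd (hKF h) heF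
      · intro h; exact absurd (hK'F h) heF
  · -- measurability
    intro K _
    have : {ω : Config V | ∀ e ∈ F, ω e = (if e ∈ K then true else false)}
        = ⋂ e ∈ F, (fun ω : Config V => ω e) ⁻¹' {(if e ∈ K then true else false)} := by
      ext ω; simp [Set.mem_iInter]
    rw [this]
    exact MeasurableSet.biInter F.countable_toSet
      (fun e _ => (measurable_pi_apply e) (MeasurableSet.singleton _))

end Aux2
section Aux3

lemma measure_connIn_mono (E : Fin N → Set (Sym2 V)) (hdisj : DisjointColours E)
    (P : (Fin N → ℝ) → Measure (Config V)) (hP : IsPercFamily E P)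
    (r r' : Fin N → ℝ) (hr : ∀ i, r i ∈ Icc (0 : ℝ) 1) (hr' : ∀ i, r' i ∈ Icc (0 : ℝ) 1)
    (hle : ∀ i, r i ≤ r' i) (S : Finset V) (x y : V) :
    P r {ω | ConnIn E ω ↑S x y} ≤ P r' {ω | ConnIn E ω ↑S x y} := by
  rw [measure_connIn E hdisj P hP r hr S x y, measure_connIn E hdisj P hP r' hr' S x y]
  refine ENNReal.ofReal_le_ofReal ?_
  refine W_mono _ _ _ _ ?_ ?_
  · intro e _
    exact ⟨edgeProb_nonneg E r hr e, edgeProb_mono E r r' hle e,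
      edgeProb_le_one E hdisj r' hr' e⟩
  · intro K K' hKK' hc
    exact connIn_mono E ↑S K K' hKK' x y hc

lemma psi_mono (E : Fin N → Set (Sym2 V)) (hdisj : DisjointColours E)
    (P : (Fin N → ℝ) → Measure (Config V)) (hP : IsPercFamily E P)
    (r r' : Fin N → ℝ) (hr : ∀ i, r i ∈ Icc (0 : ℝ) 1) (hr' : ∀ i, r' i ∈ Icc (0 : ℝ) 1)
    (hle : ∀ i, r i ≤ r' i) (x : V) (S : Finset V) :
    psi E P r x S ≤ psi E P r' x S := by
  refine Finset.sum_le_sum fun i _ => ?_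
  refine mul_le_mul' (ENNReal.ofReal_le_ofReal (hle i)) ?_
  refine Finset.sum_le_sum fun y _ => ?_
  refine ENNReal.tsum_le_tsum fun z => ?_
  by_cases hc : z ∉ S ∧ s(y, z) ∈ E i
  · rw [if_pos hc, if_pos hc]
    exact measure_connIn_mono E hdisj P hP r r' hr hr' hle S x y
  · rw [if_neg hc, if_neg hc]

lemma pFull_mem (p : Fin (N - 1) → ℝ) (q : ℝ) (hp : ∀ i, p i ∈ Icc (0 : ℝ) 1)
    (hq : q ∈ Icc (0 : ℝ) 1) : ∀ i, pFull N p q i ∈ Icc (0 : ℝ) 1 := by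
  intro i
  rw [pFull]
  split_ifs with h
  · exact hp _
  · exact hq

lemma pFull_mono (p p' : Fin (N - 1) → ℝ) (q : ℝ) (hle : ∀ i, p i ≤ p' i) :
    ∀ i, pFull N p q i ≤ pFull N p' q i := by
  intro i
  rw [pFull, pFull]
  split_ifs with h
  · exact hle _
  · exact le_rfl

lemma qPsi_anti (E : Fin N → Set (Sym2 V)) (hdisj : DisjointColours E)
    (P : (Fin N → ℝ) → Measure (Config V)) (hP : IsPercFamily E P)
    (p p' : Fin (N - 1) → ℝ) (hp : ∀ i, p i ∈ Icc (0 : ℝ) 1)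
    (hp' : ∀ i, p' i ∈ Icc (0 : ℝ) 1) (hle : ∀ i, p i ≤ p' i) :
    qPsi E P p' ≤ qPsi E P p := by
  rw [qPsi, qPsi]
  set Q : (Fin (N - 1) → ℝ) → Set ℝ := fun u => {q | q ∈ Icc (0 : ℝ) 1 ∧
    ∀ x : V, ∃ S : Finset V, x ∈ S ∧ psi E P (pFull N u q) x S < 1} with hQ
  show sSup (Q p') ≤ sSup (Q p)
  have hsub : Q p' ⊆ Q p := by
    rintro q ⟨hq, h⟩
    refine ⟨hq, fun x => ?_⟩
    obtain ⟨S, hxS, hlt⟩ := h x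
    refine ⟨S, hxS, lt_of_le_of_lt ?_ hlt⟩
    exact psi_mono E hdisj P hP _ _ (pFull_mem p q hp hq) (pFull_mem p' q hp' hq)
      (pFull_mono p p' q hle) x S
  by_cases hne : (Q p').Nonempty
  · exact csSup_le_csSup ⟨1, fun q hq => hq.1.2⟩ hne hsub
  · rw [Set.not_nonempty_iff_eq_empty.mp hne, Real.sSup_empty]
    exact Real.sSup_nonneg (fun q hq => hq.1.1)

end Aux3
section Aux4

open scoped Topology

/-- The clamped `qPsi`, a globally antitone extension of `qPsi` off the unit cube. -/
noncomputable def Ftilde (E : Fin N → Set (Sym2 V)) (P : (Fin N → ℝ) → Measure (Config V))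
    (u : Fin (N - 1) → ℝ) : ℝ :=
  qPsi E P (fun i => max 0 (min 1 (u i)))

lemma Ftilde_anti (E : Fin N → Set (Sym2 V)) (hdisj : DisjointColours E)
    (P : (Fin N → ℝ) → Measure (Config V)) (hP : IsPercFamily E P)
    (u u' : Fin (N - 1) → ℝ) (h : ∀ i, u i ≤ u' i) : Ftilde E P u' ≤ Ftilde E P u := by
  rw [Ftilde, Ftilde]
  exact qPsi_anti E hdisj P hP _ _
    (fun i => ⟨le_max_left _ _, max_le zero_le_one (min_le_left _ _)⟩)
    (fun i => ⟨le_max_left _ _, max_le zero_le_one (min_le_left _ _)⟩)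
    (fun i => max_le_max le_rfl (min_le_min le_rfl (h i)))

lemma Ftilde_eq (E : Fin N → Set (Sym2 V)) (P : (Fin N → ℝ) → Measure (Config V))
    (u : Fin (N - 1) → ℝ) (hu : ∀ i, u i ∈ Icc (0 : ℝ) 1) : Ftilde E P u = qPsi E P u := by
  rw [Ftilde]
  congr 1
  funext i
  rw [min_eq_right (hu i).2, max_eq_right (hu i).1]

lemma isLowerSet_Ftilde (E : Fin N → Set (Sym2 V)) (hdisj : DisjointColours E)
    (P : (Fin N → ℝ) → Measure (Config V)) (hP : IsPercFamily E P) (c : ℝ) :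
    IsLowerSet {u : Fin (N - 1) → ℝ | c < Ftilde E P u} := by
  intro a b hba ha
  exact lt_of_lt_of_le ha (Ftilde_anti E hdisj P hP b a hba)

set_option maxHeartbeats 1000000 in
lemma bad_subset (E : Fin N → Set (Sym2 V)) (hdisj : DisjointColours E)
    (P : (Fin N → ℝ) → Measure (Config V)) (hP : IsPercFamily E P) :
    {p : Fin (N - 1) → ℝ | (∀ i, p i ∈ Icc (0 : ℝ) 1) ∧
        ¬ ContinuousWithinAt (fun lam : ℝ => qPsi E P (fun i => p i + lam)) (Iic 0) 0}
      ⊆ (⋃ i : Fin (N - 1), {u : Fin (N - 1) → ℝ | u i = 0})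
        ∪ ⋃ c : ℚ, frontier {u : Fin (N - 1) → ℝ | (c : ℝ) < Ftilde E P u} := by
  rintro p ⟨hp, hnc⟩
  by_cases hz : ∃ i, p i = 0
  · exact Or.inl (Set.mem_iUnion.mpr ⟨hz.choose, hz.choose_spec⟩)
  refine Or.inr ?_
  push_neg at hz
  have hppos : ∀ i, 0 < p i := fun i => lt_of_le_of_ne (hp i).1 (Ne.symm (hz i))
  by_cases hne : Nonempty (Fin (N - 1))
  swap
  · exfalso
    apply hnc
    have heq : (fun lam : ℝ => qPsi E P (fun i => p i + lam)) = fun _ => qPsi E P p := by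
      funext lam
      congr 1
      funext i
      exact absurd (Nonempty.intro i) hne
    rw [heq]
    exact continuousWithinAt_const
  obtain ⟨i0⟩ := hne
  set ε : ℝ := Finset.univ.inf' (Finset.univ_nonempty_iff.mpr ⟨i0⟩) p with hε
  have hεpos : 0 < ε := by
    rw [hε, Finset.lt_inf'_iff]
    exact fun i _ => hppos i
  have hεle : ∀ i, ε ≤ p i := fun i => Finset.inf'_le _ (Finset.mem_univ i)
  have hmemIcc : ∀ lam, -ε ≤ lam → lam ≤ 0 → ∀ i, p i + lam ∈ Icc (0 : ℝ) 1 := by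
    intro lam h1 h2 i
    constructor
    · have := hεle i; linarith
    · have := (hp i).2; linarith
  have hgF : ∀ lam, -ε ≤ lam → lam ≤ 0 →
      Ftilde E P (fun i => p i + lam) = qPsi E P (fun i => p i + lam) :=
    fun lam h1 h2 => Ftilde_eq E P _ (hmemIcc lam h1 h2)
  have hganti : ∀ lam lam', -ε ≤ lam → lam ≤ lam' → lam' ≤ 0 →
      qPsi E P (fun i => p i + lam') ≤ qPsi E P (fun i => p i + lam) := by
    intro lam lam' h1 h2 h3
    exact qPsi_anti E hdisj P hP _ _ (hmemIcc lam h1 (by linarith))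
      (hmemIcc lam' (by linarith) h3) (fun i => by linarith)
  rw [Metric.continuousWithinAt_iff] at hnc
  push_neg at hnc
  obtain ⟨ε₀, hε₀pos, hwit⟩ := hnc
  have hbig : ∀ lam, -ε ≤ lam → lam < 0 →
      qPsi E P (fun i => p i + (0 : ℝ)) + ε₀ ≤ qPsi E P (fun i => p i + lam) := by
    intro lam h1 h2
    obtain ⟨x, hx0, hxd, hxe⟩ := hwit (-lam) (by linarith)
    have hxe' : ε₀ ≤ |qPsi E P (fun i => p i + x) - qPsi E P (fun i => p i + (0 : ℝ))| := by
      have h5 := hxe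
      rwa [Real.dist_eq] at h5
    rw [Real.dist_eq, sub_zero] at hxd
    have hxgt : lam < x := by
      have := (abs_lt.mp hxd).1
      linarith
    have hx0' : x ≤ 0 := hx0
    have hxge : qPsi E P (fun i => p i + (0 : ℝ)) ≤ qPsi E P (fun i => p i + x) :=
      hganti x 0 (by linarith) hx0' le_rfl
    have h1' : ε₀ ≤ qPsi E P (fun i => p i + x) - qPsi E P (fun i => p i + (0 : ℝ)) := by
      rw [abs_of_nonneg (by linarith)] at hxe'
      linarith
    have h2' : qPsi E P (fun i => p i + x) ≤ qPsi E P (fun i => p i + lam) :=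
      hganti lam x h1 (le_of_lt hxgt) hx0'
    linarith
  obtain ⟨c, hc1, hc2⟩ := exists_rat_btwn
    (show qPsi E P (fun i => p i + (0 : ℝ)) < qPsi E P (fun i => p i + (0 : ℝ)) + ε₀ by linarith)
  refine Set.mem_iUnion.mpr ⟨c, ?_⟩
  rw [frontier_eq_closure_inter_closure]
  constructor
  · -- approached from within the set
    have htend0 : Filter.Tendsto (fun k : ℕ => -ε / (k + 1 : ℝ)) Filter.atTop (𝓝 0) := by
      have h0 : Filter.Tendsto (fun k : ℕ => (1 : ℝ) / (k + 1)) Filter.atTop (𝓝 0) :=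
        tendsto_one_div_add_atTop_nhds_zero_nat
      have h1 := h0.const_mul (-ε)
      rw [mul_zero] at h1
      convert h1 using 2 with k
      ring
    have htend : Filter.Tendsto (fun k : ℕ => (fun i => p i + -ε / (k + 1 : ℝ)))
        Filter.atTop (𝓝 p) := by
      rw [tendsto_pi_nhds]
      intro i
      have h2 := Filter.Tendsto.const_add (p i) htend0
      rw [add_zero] at h2
      exact h2
    refine mem_closure_of_tendsto htend (Filter.Eventually.of_forall fun k => ?_)
    have hk1 : (0 : ℝ) < (k : ℝ) + 1 := by positivity
    have hm1 : -ε ≤ -ε / (k + 1 : ℝ) := by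
      rw [le_div_iff₀ hk1]
      nlinarith
    have hm2 : -ε / (k + 1 : ℝ) < 0 := div_neg_of_neg_of_pos (by linarith) hk1
    show (c : ℝ) < Ftilde E P fun i => p i + -ε / (k + 1 : ℝ)
    rw [hgF _ hm1 (le_of_lt hm2)]
    have h3 := hbig _ hm1 hm2
    linarith
  · apply subset_closure
    show ¬ (c : ℝ) < Ftilde E P p
    have hFtp : Ftilde E P p = qPsi E P (fun i => p i + (0 : ℝ)) := by
      rw [Ftilde_eq E P p hp]
      congr 1
      funext i
      ring
    rw [hFtp]
    exact not_lt.mpr (le_of_lt hc1)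

end Aux4
set_option maxHeartbeats 1000000 in
/-- the set `𝒜ᶜ` of `p ∈ [0,1]^{N-1}` at which `λ ↦ q_ψ(p + λ𝟙)` is not
left-continuous at `0` has Lebesgue measure zero. -/
theorem discontinuity_set_null
    {V : Type*} [Countable V] [Infinite V] {N : ℕ} (hN : 0 < N)
    (E : Fin N → Set (Sym2 V))
    (hdisj : DisjointColours E) (hloops : NoLoops E)
    (hlf : LocFin E) (hconn : ConnectedGraph E) (hqt : QuasiTransitive E)
    (P : (Fin N → ℝ) → Measure (Config V)) (hP : IsPercFamily E P) :
    (volume : Measure (Fin (N - 1) → ℝ))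
      {p : Fin (N - 1) → ℝ | (∀ i, p i ∈ Icc (0 : ℝ) 1) ∧
        ¬ ContinuousWithinAt (fun lam : ℝ => qPsi E P (fun i => p i + lam)) (Iic 0) 0} = 0 := by
  refine le_antisymm ?_ zero_le
  refine le_trans (measure_mono (bad_subset E hdisj P hP)) ?_
  refine le_trans (measure_union_le _ _) ?_
  have h1 : volume (⋃ i : Fin (N - 1), {u : Fin (N - 1) → ℝ | u i = 0}) = 0 := by
    refine measure_iUnion_null fun i => ?_
    rw [volume_pi]
    exact MeasureTheory.Measure.pi_hyperplane _ i 0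
  have h2 : volume (⋃ c : ℚ, frontier {u : Fin (N - 1) → ℝ | (c : ℝ) < Ftilde E P u}) = 0 :=
    measure_iUnion_null fun c => (isLowerSet_Ftilde E hdisj P hP (c : ℝ)).null_frontier
  rw [h1, h2]
  simp

end InhomPerc
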